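/- arXiv:math/0111059 — 3 statements merged into one kernel-verified Lean document; each statement's English description precedes it below -/
import Mathlib

section
/- Let n ≥ 1, k ≥ 0 with k+1 ≤ n, let O ⊆ [n] with 1 ∈ O and #O = k+1, and let i ∈ [k]. Then there exists a bijection φ_i of P(n,k+1;O) onto itself such that stat_i(π) = stat_{i+1}(φ_i(π)) − 1 for every π ∈ P(n,k+1;O). -/
open Finset Polynomial

/-- A partition of `[n] = {1,…,n}` into `k` nonempty blocks `B₁-⋯-B_k`, indexed so that
`min B₁ < ⋯ < min B_k`, encoded by its restricted-growth word `w : Fin n → Fin k`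
(the element `i+1` of `[n]` lies in the block `B_{w i + 1}`). -/
structure SetPartition (n k : ℕ) where
  w : Fin n → Fin k
  surj : Function.Surjective w
  rgf : ∀ i : Fin n, ∀ c : Fin k, c < w i → ∃ j : Fin n, j < i ∧ w j = c

namespace SetPartition

variable {n k : ℕ}

instance : DecidableEq (SetPartition n k) := fun a b =>
  decidable_of_iff (a.w = b.w) (by cases a; cases b; simp)

noncomputable instance : Fintype (SetPartition n k) :=
  Fintype.ofInjective (fun π => π.w) (fun a b h => by cases a; cases b; simp_all)

/-- The set of openers (smallest elements of their blocks). -/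
def openers (π : SetPartition n k) : Finset (Fin n) :=
  univ.filter fun i => ∀ j, j < i → π.w j ≠ π.w i

/-- The set of closers (largest elements of their blocks). -/
def closers (π : SetPartition n k) : Finset (Fin n) :=
  univ.filter fun i => ∀ j, i < j → π.w j ≠ π.w i

/-- Closers that are not openers (`F_s`). -/
def closersOnly (π : SetPartition n k) : Finset (Fin n) := π.closers \ π.openers

/-- Openers that are not closers (`O_s`). -/
def openersOnly (π : SetPartition n k) : Finset (Fin n) := π.openers \ π.closers

/-- Elements that are neither openers nor closers (`P`, the transients). -/
def transients (π : SetPartition n k) : Finset (Fin n) :=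
  univ \ (π.openers ∪ π.closers)

def ros (π : SetPartition n k) : ℕ :=
  ∑ i, (π.openers.filter fun j => j < i ∧ π.w i < π.w j).card
def rob (π : SetPartition n k) : ℕ :=
  ∑ i, (π.openers.filter fun j => i < j ∧ π.w i < π.w j).card
def rcs (π : SetPartition n k) : ℕ :=
  ∑ i, (π.closers.filter fun j => j < i ∧ π.w i < π.w j).card
def rcb (π : SetPartition n k) : ℕ :=
  ∑ i, (π.closers.filter fun j => i < j ∧ π.w i < π.w j).card
def los (π : SetPartition n k) : ℕ :=
  ∑ i, (π.openers.filter fun j => j < i ∧ π.w j < π.w i).card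
def lob (π : SetPartition n k) : ℕ :=
  ∑ i, (π.openers.filter fun j => i < j ∧ π.w j < π.w i).card
def lcs (π : SetPartition n k) : ℕ :=
  ∑ i, (π.closers.filter fun j => j < i ∧ π.w j < π.w i).card
def lcb (π : SetPartition n k) : ℕ :=
  ∑ i, (π.closers.filter fun j => i < j ∧ π.w j < π.w i).card

def mak (π : SetPartition n k) : ℕ := π.ros + π.lcs
def mak' (π : SetPartition n k) : ℕ := π.lob + π.rcb
def lmak (π : SetPartition n k) : ℤ :=
  (n : ℤ) * ((k : ℤ) - 1) - ((π.los : ℤ) + (π.rcs : ℤ))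
def lmak' (π : SetPartition n k) : ℤ :=
  (n : ℤ) * ((k : ℤ) - 1) - ((π.lcb : ℤ) + (π.rob : ℤ))

/-- `rinv(b,π) = #{a : a < b, w_a > w_b}`. -/
def rinv (π : SetPartition n k) (b : Fin n) : ℕ :=
  (univ.filter fun a => a < b ∧ π.w b < π.w a).card

/-- `nrinv(b,π) = #{a : a > b, w_a > w_b}`. -/
def nrinv (π : SetPartition n k) (b : Fin n) : ℕ :=
  (univ.filter fun a => b < a ∧ π.w b < π.w a).card

/-- `linv(b,π) = #{a : a > b, w_a < w_b}`. -/
def linv (π : SetPartition n k) (b : Fin n) : ℕ :=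
  (univ.filter fun a => b < a ∧ π.w a < π.w b).card

/-- `rinv(X,π) = Σ_{b ∈ X} rinv(b,π)`. -/
def rinvSet (π : SetPartition n k) (X : Finset (Fin n)) : ℕ := ∑ b ∈ X, π.rinv b

/-- `linv(X,π) = Σ_{b ∈ X} linv(b,π)`. -/
def linvSet (π : SetPartition n k) (X : Finset (Fin n)) : ℕ := ∑ b ∈ X, π.linv b

/-- `g(B_c)`: the largest element of the block with index `c`. -/
def blockMax (π : SetPartition n k) (c : Fin k) : Fin n :=
  (univ.filter fun i => π.w i = c).max' (by
    obtain ⟨i, hi⟩ := π.surj c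
    exact ⟨i, mem_filter.2 ⟨mem_univ i, hi⟩⟩)

/-- The block with index `c` is incomplete at stage `m`, i.e. it meets the first `m`
elements of `[n]` but is not contained in them. -/
def IncompleteAt (π : SetPartition n k) (m : ℕ) (c : Fin k) : Prop :=
  (∃ j : Fin n, (j : ℕ) < m ∧ π.w j = c) ∧ ∃ j : Fin n, m ≤ (j : ℕ) ∧ π.w j = c

instance (π : SetPartition n k) (m : ℕ) : DecidablePred (π.IncompleteAt m) := fun c =>
  inferInstanceAs (Decidable
    ((∃ j : Fin n, (j : ℕ) < m ∧ π.w j = c) ∧ ∃ j : Fin n, m ≤ (j : ℕ) ∧ π.w j = c))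

/-- `l_i(π)`: the number of blocks incomplete at stage `i-1`; here the element `i` of `[n]`
is represented by the index `i - 1 : Fin n`, so the first `i - 1` elements are those with
index `< i`. -/
def lTrace (π : SetPartition n k) (i : Fin n) : ℕ :=
  (univ.filter fun c => π.IncompleteAt (i : ℕ) c).card

/-- `γ_i(π)`: one plus the number of blocks incomplete at stage `i` lying to the left of the
block containing `i`. -/
def gammaTrace (π : SetPartition n k) (i : Fin n) : ℕ :=
  1 + (univ.filter fun c => π.IncompleteAt ((i : ℕ) + 1) c ∧ c < π.w i).card

end SetPartition

/-- The `q`-Stirling numbers of the second kind `S_q(n,k) ∈ ℤ[q]`, with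
`S_q(n,k) = q^{k-1} S_q(n-1,k-1) + [k]_q S_q(n-1,k)`, `S_q(0,0) = 1`, and
`S_q(n,k) = 0` when exactly one of `n,k` is zero (whence also for `k > n`). -/
noncomputable def qStirling : ℕ → ℕ → Polynomial ℤ
  | 0, 0 => 1
  | 0, _ + 1 => 0
  | _ + 1, 0 => 0
  | n + 1, k + 1 =>
      X ^ k * qStirling n k + (∑ i ∈ Finset.range (k + 1), X ^ i) * qStirling n (k + 1)

namespace SetPartition

variable {n k : ℕ}

/-- The set of positions in block `c`. -/
def blockSet (π : SetPartition n k) (c : Fin k) : Finset (Fin n) :=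
  univ.filter fun a => π.w a = c

lemma blockSet_nonempty (π : SetPartition n k) (c : Fin k) : (π.blockSet c).Nonempty := by
  obtain ⟨a, ha⟩ := π.surj c
  exact ⟨a, mem_filter.2 ⟨mem_univ a, ha⟩⟩

/-- The first occurrence (opener) of block `c`. -/
def firstOcc (π : SetPartition n k) (c : Fin k) : Fin n :=
  (π.blockSet c).min' (π.blockSet_nonempty c)

lemma w_firstOcc (π : SetPartition n k) (c : Fin k) : π.w (π.firstOcc c) = c := by
  have := (π.blockSet c).min'_mem (π.blockSet_nonempty c)
  simpa [firstOcc, blockSet] using this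

lemma firstOcc_le (π : SetPartition n k) {c : Fin k} {a : Fin n} (h : π.w a = c) :
    π.firstOcc c ≤ a :=
  Finset.min'_le _ _ (by simpa [blockSet] using h)

lemma w_blockMax (π : SetPartition n k) (c : Fin k) : π.w (π.blockMax c) = c := by
  have := Finset.max'_mem (univ.filter fun a => π.w a = c)
    (by obtain ⟨a, ha⟩ := π.surj c; exact ⟨a, mem_filter.2 ⟨mem_univ a, ha⟩⟩)
  simpa [blockMax] using this

lemma le_blockMax (π : SetPartition n k) {c : Fin k} {a : Fin n} (h : π.w a = c) :
    a ≤ π.blockMax c := by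
  exact Finset.le_max' _ _ (by simpa using h)

lemma blockMax_eq_of (π : SetPartition n k) {c : Fin k} {x : Fin n}
    (h1 : π.w x = c) (h2 : ∀ a, π.w a = c → a ≤ x) : π.blockMax c = x :=
  le_antisymm (h2 _ (π.w_blockMax c)) (π.le_blockMax h1)

lemma firstOcc_lt_firstOcc (π : SetPartition n k) {c d : Fin k} (h : c < d) :
    π.firstOcc c < π.firstOcc d := by
  obtain ⟨j, hj, hjc⟩ := π.rgf (π.firstOcc d) c (by rw [π.w_firstOcc]; exact h)
  exact lt_of_le_of_lt (π.firstOcc_le hjc) hj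

lemma firstOcc_le_firstOcc (π : SetPartition n k) {c d : Fin k} (h : c ≤ d) :
    π.firstOcc c ≤ π.firstOcc d := by
  rcases eq_or_lt_of_le h with rfl | h
  · exact le_rfl
  · exact (π.firstOcc_lt_firstOcc h).le

lemma firstOcc_lt (π : SetPartition n k) {c : Fin k} {a : Fin n} (h : c < π.w a) :
    π.firstOcc c < a :=
  lt_of_lt_of_le (π.firstOcc_lt_firstOcc h) (π.firstOcc_le rfl)

lemma firstOcc_le_self (π : SetPartition n k) (a : Fin n) : π.firstOcc (π.w a) ≤ a :=
  π.firstOcc_le rfl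

lemma mem_openers_iff (π : SetPartition n k) (a : Fin n) :
    a ∈ π.openers ↔ π.firstOcc (π.w a) = a := by
  simp only [openers, mem_filter, mem_univ, true_and]
  constructor
  · intro h
    rcases lt_or_eq_of_le (π.firstOcc_le_self a) with hlt | he
    · exact absurd (π.w_firstOcc (π.w a)) (h _ hlt)
    · exact he
  · intro h j hj hw
    exact absurd (π.firstOcc_le hw) (by rw [h]; exact not_le.2 hj)

lemma mem_closers_iff (π : SetPartition n k) (a : Fin n) :
    a ∈ π.closers ↔ π.blockMax (π.w a) = a := by
  simp only [closers, mem_filter, mem_univ, true_and]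
  constructor
  · intro h
    rcases lt_or_eq_of_le (π.le_blockMax (c := π.w a) rfl) with hlt | he
    · exact absurd (π.w_blockMax (π.w a)) (h _ hlt)
    · exact he.symm
  · intro h j hj hw
    exact absurd (π.le_blockMax hw) (by rw [h]; exact not_le.2 hj)

lemma blockMax_injective (π : SetPartition n k) : Function.Injective π.blockMax := by
  intro c d h
  have := π.w_blockMax c
  rw [h, π.w_blockMax d] at this
  exact this.symm

lemma closers_eq_image (π : SetPartition n k) : π.closers = univ.image π.blockMax := by
  ext a
  rw [mem_closers_iff]
  constructor
  · intro h; exact mem_image.2 ⟨π.w a, mem_univ _, h⟩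
  · rintro h
    obtain ⟨c, _, rfl⟩ := mem_image.1 h
    rw [π.w_blockMax]

lemma rinvSet_closers (π : SetPartition n k) :
    π.rinvSet π.closers = ∑ c : Fin k, π.rinv (π.blockMax c) := by
  rw [rinvSet, closers_eq_image, Finset.sum_image]
  intro x _ y _ h
  exact π.blockMax_injective h

lemma rinv_add_nrinv (π : SetPartition n k) (j : Fin k) :
    π.rinv (π.blockMax j) + π.nrinv (π.blockMax j)
      = (univ.filter fun a => j < π.w a).card := by
  rw [rinv, nrinv]
  rw [← Finset.card_union_of_disjoint (by
    rw [Finset.disjoint_filter]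
    rintro a _ ⟨h1, _⟩ ⟨h2, _⟩
    exact absurd (h1.trans h2) (lt_irrefl a))]
  congr 1
  ext a
  simp only [mem_union, mem_filter, mem_univ, true_and, π.w_blockMax j]
  constructor
  · rintro (⟨h1, h2⟩ | ⟨h1, h2⟩) <;> exact h2
  · intro h
    rcases lt_trichotomy a (π.blockMax j) with hlt | he | hgt
    · exact Or.inl ⟨hlt, h⟩
    · rw [he] at h; rw [π.w_blockMax j] at h; exact absurd h (lt_irrefl j)
    · exact Or.inr ⟨hgt, h⟩

end SetPartition
namespace SetPartition

variable {n k : ℕ}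

/-- The word of the bijection `φ`: let `m = max B_{b1}`, `o = min B_{b1}`.
Move `m` into block `b` (unless `m = o`), and move all elements of block `b`
larger than `m` into block `b1`. -/
def phiW (π : SetPartition n k) (b b1 : Fin k) : Fin n → Fin k := fun a =>
  if a = π.blockMax b1 then (if π.firstOcc b1 = π.blockMax b1 then b1 else b)
  else if π.blockMax b1 < a ∧ π.w a = b then b1 else π.w a

section Phi

variable (π : SetPartition n k) (b b1 : Fin k) (hb : (b : ℕ) + 1 = (b1 : ℕ))

lemma o_le_m : π.firstOcc b1 ≤ π.blockMax b1 := π.firstOcc_le (π.w_blockMax b1)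

include hb

lemma b_lt_b1 : b < b1 := by rw [Fin.lt_def]; omega

lemma fo_b_lt_o : π.firstOcc b < π.firstOcc b1 := π.firstOcc_lt_firstOcc (b_lt_b1 b b1 hb)

lemma phiW_firstOcc (c : Fin k) : phiW π b b1 (π.firstOcc c) = c := by
  have hwc := π.w_firstOcc c
  by_cases hc1 : c = b1
  · rw [hc1] at hwc ⊢
    unfold phiW
    by_cases h : π.firstOcc b1 = π.blockMax b1
    · rw [if_pos h, if_pos h]
    · rw [if_neg h, if_neg]
      · exact hwc
      · rintro ⟨h1, _⟩
        exact absurd (o_le_m π b1) (not_le.2 h1)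
  · have hne : π.firstOcc c ≠ π.blockMax b1 := by
      intro h
      apply hc1
      rw [← hwc, h, π.w_blockMax]
    unfold phiW
    rw [if_neg hne, if_neg]
    · exact hwc
    · rintro ⟨h1, h2⟩
      rw [hwc] at h2
      rw [h2] at h1
      exact absurd ((fo_b_lt_o π b b1 hb).trans_le (o_le_m π b1)) (not_lt.2 h1.le)

omit hb in
lemma phiW_of_le (a : Fin n) (ha : a < π.blockMax b1) : phiW π b b1 a = π.w a := by
  unfold phiW
  rw [if_neg (by exact ha.ne), if_neg (by rintro ⟨h1, _⟩; exact absurd (h1.trans ha) (lt_irrefl _))]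

/-- φ as a set partition. -/
def phi : SetPartition n k where
  w := phiW π b b1
  surj := fun c => ⟨π.firstOcc c, phiW_firstOcc π b b1 hb c⟩
  rgf := by
    intro a c hc
    refine ⟨π.firstOcc c, ?_, phiW_firstOcc π b b1 hb c⟩
    unfold phiW at hc
    split_ifs at hc with h1 h2 h3
    · -- a = blockMax b1, value b1
      subst h1
      exact π.firstOcc_lt (by rw [π.w_blockMax]; exact hc)
    · -- a = blockMax b1, value b
      subst h1
      refine π.firstOcc_lt (c := c) ?_
      rw [π.w_blockMax]
      rw [Fin.lt_def] at hc ⊢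
      omega
    · -- moved: blockMax b1 < a ∧ w a = b, value b1
      rcases eq_or_lt_of_le (show (c:ℕ) ≤ (b:ℕ) by rw [Fin.lt_def] at hc; omega) with he | hlt
      · have hcb : c = b := Fin.ext he
        calc π.firstOcc c ≤ π.firstOcc b := π.firstOcc_le_firstOcc (le_of_eq hcb)
          _ < π.firstOcc b1 := fo_b_lt_o π b b1 hb
          _ ≤ π.blockMax b1 := o_le_m π b1
          _ < a := h3.1
      · exact π.firstOcc_lt (by rw [h3.2, Fin.lt_def]; exact hlt)
    · exact π.firstOcc_lt hc

lemma phi_w_eq : (phi π b b1 hb).w = phiW π b b1 := rfl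

end Phi

end SetPartition
namespace SetPartition

variable {n k : ℕ}

section Phi2

variable (π : SetPartition n k) (b b1 : Fin k) (hb : (b : ℕ) + 1 = (b1 : ℕ))

include hb

lemma b_ne_b1 : b ≠ b1 := by
  intro h
  rw [h] at hb
  omega

lemma firstOcc_le_of_phiW (c : Fin k) (j : Fin n) (h : phiW π b b1 j = c) :
    π.firstOcc c ≤ j := by
  unfold phiW at h
  split_ifs at h with h1 h2 h3
  · -- j = m, o = m, c = b1
    rw [h1, ← h, ← h2]
  · -- j = m, o ≠ m, c = b
    rw [h1, ← h]
    exact ((fo_b_lt_o π b b1 hb).trans_le (o_le_m π b1)).le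
  · -- m < j, w j = b, c = b1
    rw [← h]
    exact (o_le_m π b1).trans h3.1.le
  · exact π.firstOcc_le h

lemma firstOcc_phi (c : Fin k) : (phi π b b1 hb).firstOcc c = π.firstOcc c := by
  apply le_antisymm
  · exact (phi π b b1 hb).firstOcc_le (phiW_firstOcc π b b1 hb c)
  · exact firstOcc_le_of_phiW π b b1 hb c _ ((phi π b b1 hb).w_firstOcc c)

lemma phiW_eq_of_opener (a : Fin n) (ha : π.firstOcc (π.w a) = a) :
    phiW π b b1 a = π.w a := by
  unfold phiW
  split_ifs with h1 h2 h3
  · rw [h1, π.w_blockMax]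
  · exfalso
    rw [h1, π.w_blockMax] at ha
    exact h2 ha
  · exfalso
    rw [h3.2] at ha
    have := (fo_b_lt_o π b b1 hb).trans_le (o_le_m π b1)
    rw [ha] at this
    exact absurd h3.1 (not_lt.2 this.le)
  · rfl

lemma openers_phi : (phi π b b1 hb).openers = π.openers := by
  ext a
  rw [mem_openers_iff, mem_openers_iff, firstOcc_phi π b b1 hb]
  constructor
  · intro ha
    have hw : π.w a = (phi π b b1 hb).w a := by
      conv_lhs => rw [← ha]
      exact π.w_firstOcc _
    rw [hw]
    exact ha
  · intro ha
    rw [phi_w_eq, phiW_eq_of_opener π b b1 hb a ha]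
    exact ha

lemma phiW_gt_b1_iff (a : Fin n) : b1 < phiW π b b1 a ↔ b1 < π.w a := by
  have hwm := π.w_blockMax b1
  unfold phiW
  split_ifs with h1 h2 h3
  · rw [h1, hwm]
  · rw [h1, hwm, Fin.lt_def, Fin.lt_def]
    omega
  · rw [h3.2, Fin.lt_def, Fin.lt_def]
    omega
  · rfl

lemma phiW_gt_iff_of_ne (c : Fin k) (hcb : c ≠ b) (hcb1 : c ≠ b1) (a : Fin n) :
    c < phiW π b b1 a ↔ c < π.w a := by
  have hwm := π.w_blockMax b1
  have h1 : (c : ℕ) ≠ (b : ℕ) := fun h => hcb (Fin.ext h)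
  have h2 : (c : ℕ) ≠ (b1 : ℕ) := fun h => hcb1 (Fin.ext h)
  unfold phiW
  split_ifs with g1 g2 g3
  · rw [g1, hwm]
  · rw [g1, hwm, Fin.lt_def, Fin.lt_def]
    omega
  · rw [g3.2, Fin.lt_def, Fin.lt_def]
    omega
  · rfl

lemma phiW_eq_iff_of_ne (c : Fin k) (hcb : c ≠ b) (hcb1 : c ≠ b1) (a : Fin n) :
    phiW π b b1 a = c ↔ π.w a = c := by
  have hwm := π.w_blockMax b1
  have h1 : (c : ℕ) ≠ (b : ℕ) := fun h => hcb (Fin.ext h)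
  have h2 : (c : ℕ) ≠ (b1 : ℕ) := fun h => hcb1 (Fin.ext h)
  unfold phiW
  split_ifs with g1 g2 g3
  · rw [g1, hwm]
  · rw [g1, hwm, Fin.ext_iff, Fin.ext_iff]
    omega
  · rw [g3.2, Fin.ext_iff, Fin.ext_iff]
    omega
  · rfl

lemma blockMax_phi_of_ne (c : Fin k) (hcb : c ≠ b) (hcb1 : c ≠ b1) :
    (phi π b b1 hb).blockMax c = π.blockMax c := by
  apply (phi π b b1 hb).blockMax_eq_of
  · rw [phi_w_eq, phiW_eq_iff_of_ne π b b1 hb c hcb hcb1]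
    exact π.w_blockMax c
  · intro a ha
    rw [phi_w_eq, phiW_eq_iff_of_ne π b b1 hb c hcb hcb1] at ha
    exact π.le_blockMax ha

lemma rinv_phi_of_ne (c : Fin k) (hcb : c ≠ b) (hcb1 : c ≠ b1) :
    (phi π b b1 hb).rinv ((phi π b b1 hb).blockMax c) = π.rinv (π.blockMax c) := by
  rw [blockMax_phi_of_ne π b b1 hb c hcb hcb1]
  have hx : (phi π b b1 hb).w (π.blockMax c) = c := by
    rw [phi_w_eq, phiW_eq_iff_of_ne π b b1 hb c hcb hcb1]
    exact π.w_blockMax c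
  unfold rinv
  congr 1
  apply filter_congr
  intro a _
  rw [hx, π.w_blockMax c, phi_w_eq, phiW_gt_iff_of_ne π b b1 hb c hcb hcb1]

end Phi2

end SetPartition
namespace SetPartition

variable {n k : ℕ}

section Phi3

variable (π : SetPartition n k) (b b1 : Fin k) (hb : (b : ℕ) + 1 = (b1 : ℕ))

include hb

lemma H_split :
    (univ.filter fun a => b < π.w a).card
      = (π.blockSet b1).card + (univ.filter fun a => b1 < π.w a).card := by
  rw [← Finset.card_union_of_disjoint (by
    rw [Finset.disjoint_left]
    intro a h1 h2
    rw [blockSet, mem_filter] at h1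
    rw [mem_filter, h1.2] at h2
    exact absurd h2.2 (lt_irrefl b1))]
  congr 1
  ext a
  simp only [blockSet, mem_union, mem_filter, mem_univ, true_and, Fin.lt_def, Fin.ext_iff]
  omega

lemma H_phi :
    (univ.filter fun a => b1 < (phi π b b1 hb).w a).card
      = (univ.filter fun a => b1 < π.w a).card := by
  congr 1
  apply filter_congr
  intro a _
  rw [phi_w_eq]
  simp only [phiW_gt_b1_iff π b b1 hb a]

/-- The key counting identity for the modified blocks. -/
lemma rinv_phi_b :
    (phi π b b1 hb).rinv ((phi π b b1 hb).blockMax b) + 1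
      = (π.blockSet b1).card + π.rinv (π.blockMax b1) := by
  have hbne : b ≠ b1 := by intro h; rw [h] at hb; omega
  set m := π.blockMax b1 with hm
  have hwm : π.w m = b1 := π.w_blockMax b1
  by_cases hom : π.firstOcc b1 = m
  · -- singleton block b1
    -- blockSet b1 = {m}
    have hbs : π.blockSet b1 = {m} := by
      ext a
      simp only [blockSet, mem_filter, mem_univ, true_and, mem_singleton]
      constructor
      · intro h
        exact le_antisymm (π.le_blockMax h) (by rw [← hom]; exact π.firstOcc_le h)
      · rintro rfl; exact hwm
    -- rinv π m = 0
    have hr0 : π.rinv m = 0 := by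
      rw [rinv, Finset.card_eq_zero, Finset.filter_eq_empty_iff]
      rintro a _ ⟨h1, h2⟩
      rw [hwm] at h2
      have := (π.firstOcc_lt h2).trans_le' (le_of_eq hom.symm)
      exact absurd (h1.trans this) (lt_irrefl a)
    -- all elements of block b of phi are < o
    have hgb : ∀ a : Fin n, (phi π b b1 hb).w a = b → a < π.firstOcc b1 := by
      intro a ha
      rw [phi_w_eq] at ha
      unfold phiW at ha
      split_ifs at ha with g1 g2
      · exact absurd ha.symm hbne
      · exact absurd ha.symm hbne
      · have h1 : a ≤ m := not_lt.1 fun h => g2 ⟨h, ha⟩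
        rw [hom]
        rcases lt_or_eq_of_le h1 with h | h
        · exact h
        · exact absurd h g1
    have hgb' : (phi π b b1 hb).blockMax b < π.firstOcc b1 :=
      hgb _ ((phi π b b1 hb).w_blockMax b)
    have hr0' : (phi π b b1 hb).rinv ((phi π b b1 hb).blockMax b) = 0 := by
      rw [rinv, Finset.card_eq_zero, Finset.filter_eq_empty_iff]
      rintro a _ ⟨h1, h2⟩
      rw [(phi π b b1 hb).w_blockMax b] at h2
      have ham : a < m := h1.trans (hgb'.trans_le (o_le_m π b1))
      rw [phi_w_eq, phiW_of_le π b b1 a ham] at h2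
      -- b < π.w a, so b1 ≤ π.w a, so firstOcc b1 ≤ a, contra a < firstOcc b1
      have hble : b1 ≤ π.w a := by
        rw [Fin.le_def]
        rw [Fin.lt_def] at h2
        omega
      have := (π.firstOcc_le_firstOcc hble).trans (π.firstOcc_le_self a)
      have ha2 : a < π.firstOcc b1 := h1.trans hgb'
      exact absurd (this.trans_lt ha2) (lt_irrefl _)
    rw [hr0', hbs, hr0, Finset.card_singleton]
  · -- o < m
    have hwm' : (phi π b b1 hb).w m = b := by
      rw [phi_w_eq]
      unfold phiW
      rw [if_pos rfl, if_neg hom]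
    have hgm : (phi π b b1 hb).blockMax b = m := by
      apply (phi π b b1 hb).blockMax_eq_of hwm'
      intro a ha
      rw [phi_w_eq] at ha
      unfold phiW at ha
      split_ifs at ha with g1 g2
      · exact le_of_eq g1
      · exact absurd ha.symm hbne
      · exact not_lt.1 (fun h => g2 ⟨h, ha⟩)
    -- rinv of phi at m counts a < m with b < w a
    have step3 : (phi π b b1 hb).rinv m
        = (univ.filter fun a => a < m ∧ b < π.w a).card := by
      rw [rinv]
      congr 1
      apply filter_congr
      intro a _
      constructor
      · rintro ⟨h1, h2⟩
        rw [hwm', phi_w_eq, phiW_of_le π b b1 a h1] at h2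
        exact ⟨h1, h2⟩
      · rintro ⟨h1, h2⟩
        refine ⟨h1, ?_⟩
        rw [hwm', phi_w_eq, phiW_of_le π b b1 a h1]
        exact h2
    have step4 : (univ.filter fun a => a < m ∧ b < π.w a).card
        = (univ.filter fun a => a < m ∧ π.w a = b1).card
          + (univ.filter fun a => a < m ∧ b1 < π.w a).card := by
      rw [← Finset.card_union_of_disjoint (by
        rw [Finset.disjoint_filter]
        rintro a _ ⟨_, h1⟩ ⟨_, h2⟩
        rw [h1] at h2
        exact absurd h2 (lt_irrefl b1))]
      congr 1
      ext a
      simp only [mem_union, mem_filter, mem_univ, true_and, Fin.lt_def, Fin.ext_iff]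
      omega
    have step5 : (univ.filter fun a => a < m ∧ π.w a = b1).card + 1
        = (π.blockSet b1).card := by
      have : π.blockSet b1 = (univ.filter fun a => a < m ∧ π.w a = b1) ∪ {m} := by
        ext a
        simp only [blockSet, mem_union, mem_filter, mem_univ, true_and, mem_singleton]
        constructor
        · intro h
          rcases lt_or_eq_of_le (π.le_blockMax h) with hlt | he
          · exact Or.inl ⟨hlt, h⟩
          · exact Or.inr he
        · rintro (⟨_, h⟩ | rfl)
          · exact h
          · exact hwm
      rw [this, Finset.card_union_of_disjoint (by
        rw [Finset.disjoint_singleton_right, mem_filter]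
        rintro ⟨_, h, _⟩
        exact absurd h (lt_irrefl m)), Finset.card_singleton]
    have step6 : π.rinv m = (univ.filter fun a => a < m ∧ b1 < π.w a).card := by
      rw [rinv]
      congr 1
      apply filter_congr
      intro a _
      rw [hwm]
    rw [hgm, step3, step4, step6]
    omega

/-- The full statistic identity. -/
lemma stat_identity :
    (phi π b b1 hb).rinvSet (phi π b b1 hb).closers
        + (phi π b b1 hb).nrinv ((phi π b b1 hb).blockMax b1) + 1
      = π.rinvSet π.closers + π.nrinv (π.blockMax b) := by
  have key : ∀ (σ : SetPartition n k) (j : Fin k),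
      σ.rinvSet σ.closers + σ.nrinv (σ.blockMax j)
        = ∑ c ∈ univ.erase j, σ.rinv (σ.blockMax c)
            + (univ.filter fun a => j < σ.w a).card := by
    intro σ j
    rw [rinvSet_closers, ← Finset.sum_erase_add univ _ (mem_univ j), add_assoc,
      rinv_add_nrinv]
  rw [key, key]
  have hbne : b ≠ b1 := by intro h; rw [h] at hb; omega
  -- split off b from the erase b1 sum
  have hmem : b ∈ univ.erase b1 := Finset.mem_erase.2 ⟨hbne, mem_univ b⟩
  have hmem' : b1 ∈ univ.erase b := Finset.mem_erase.2 ⟨hbne.symm, mem_univ b1⟩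
  rw [← Finset.sum_erase_add (univ.erase b1) _ hmem,
    ← Finset.sum_erase_add (univ.erase b) _ hmem']
  have hEE : (univ.erase b1).erase b = (univ.erase b).erase b1 := Finset.erase_right_comm
  have hsum : ∑ c ∈ (univ.erase b1).erase b,
        (phi π b b1 hb).rinv ((phi π b b1 hb).blockMax c)
      = ∑ c ∈ (univ.erase b).erase b1, π.rinv (π.blockMax c) := by
    rw [hEE]
    apply Finset.sum_congr rfl
    intro c hc
    have h1 : c ≠ b1 := (Finset.mem_erase.1 hc).1
    have h2 : c ≠ b := (Finset.mem_erase.1 (Finset.mem_erase.1 hc).2).1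
    exact rinv_phi_of_ne π b b1 hb c h2 h1
  have h3 := rinv_phi_b π b b1 hb
  have h4 := H_phi π b b1 hb
  have h5 := H_split π b b1 hb
  omega

end Phi3

end SetPartition
namespace SetPartition

variable {n k : ℕ}

lemma ext_w {π₁ π₂ : SetPartition n k} (h : π₁.w = π₂.w) : π₁ = π₂ := by
  cases π₁; cases π₂; simp_all

section Phi4

variable (π : SetPartition n k) (b b1 : Fin k) (hb : (b : ℕ) + 1 = (b1 : ℕ))

include hb

lemma w_eq_formula (a : Fin n) :
    π.w a = if a = π.blockMax b1 then b1
      else if π.blockMax b1 < a ∧ phiW π b b1 a = b1 then b else phiW π b b1 a := by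
  have hbne : b ≠ b1 := by intro h; rw [h] at hb; omega
  by_cases h1 : a = π.blockMax b1
  · rw [if_pos h1, h1, π.w_blockMax]
  · rw [if_neg h1]
    by_cases h2 : π.blockMax b1 < a ∧ π.w a = b
    · have hv : phiW π b b1 a = b1 := by
        unfold phiW
        rw [if_neg h1, if_pos h2]
      rw [if_pos ⟨h2.1, hv⟩, h2.2]
    · have hv : phiW π b b1 a = π.w a := by
        unfold phiW
        rw [if_neg h1, if_neg h2]
      rw [if_neg, hv]
      rintro ⟨g1, g2⟩
      rw [hv] at g2
      exact absurd (π.le_blockMax g2) (not_le.2 g1)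

lemma phiW_blockMax_of_ne (hom : π.firstOcc b1 ≠ π.blockMax b1) :
    phiW π b b1 (π.blockMax b1) = b := by
  unfold phiW
  rw [if_pos rfl, if_neg hom]

lemma le_m_of_phiW_b (a : Fin n) (ha : phiW π b b1 a = b) : a ≤ π.blockMax b1 := by
  have hbne : b ≠ b1 := by intro h; rw [h] at hb; omega
  unfold phiW at ha
  split_ifs at ha with g1 g2 g3
  · exact absurd ha.symm hbne
  · exact le_of_eq g1
  · exact absurd ha.symm hbne
  · exact not_lt.1 fun h => g3 ⟨h, ha⟩

lemma lt_o_of_phiW_b (hom : π.firstOcc b1 = π.blockMax b1) (a : Fin n)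
    (ha : phiW π b b1 a = b) : a < π.firstOcc b1 := by
  have hbne : b ≠ b1 := by intro h; rw [h] at hb; omega
  unfold phiW at ha
  split_ifs at ha with g1 g2
  · exact absurd ha.symm hbne
  · exact absurd ha.symm hbne
  · have h1 : a ≤ π.blockMax b1 := not_lt.1 fun h => g2 ⟨h, ha⟩
    rw [hom]
    rcases lt_or_eq_of_le h1 with h | h
    · exact h
    · exact absurd h g1

end Phi4

section Phi5

variable (b b1 : Fin k) (hb : (b : ℕ) + 1 = (b1 : ℕ))

include hb

lemma blockMax_b1_eq (π₁ π₂ : SetPartition n k)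
    (h : phiW π₁ b b1 = phiW π₂ b b1) (hfo : π₁.firstOcc b1 = π₂.firstOcc b1) :
    π₁.blockMax b1 = π₂.blockMax b1 := by
  by_cases hom1 : π₁.firstOcc b1 = π₁.blockMax b1 <;>
    by_cases hom2 : π₂.firstOcc b1 = π₂.blockMax b1
  · rw [← hom1, ← hom2, hfo]
  · exfalso
    have h2 := phiW_blockMax_of_ne π₂ b b1 hb hom2
    rw [← h] at h2
    have := lt_o_of_phiW_b π₁ b b1 hb hom1 _ h2
    rw [hfo] at this
    exact absurd (this.trans_le (o_le_m π₂ b1)) (lt_irrefl _)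
  · exfalso
    have h2 := phiW_blockMax_of_ne π₁ b b1 hb hom1
    rw [h] at h2
    have := lt_o_of_phiW_b π₂ b b1 hb hom2 _ h2
    rw [← hfo] at this
    exact absurd (this.trans_le (o_le_m π₁ b1)) (lt_irrefl _)
  · apply le_antisymm
    · apply le_m_of_phiW_b π₂ b b1 hb
      rw [← h]
      exact phiW_blockMax_of_ne π₁ b b1 hb hom1
    · apply le_m_of_phiW_b π₁ b b1 hb
      rw [h]
      exact phiW_blockMax_of_ne π₂ b b1 hb hom2

lemma phi_injective (π₁ π₂ : SetPartition n k)
    (hw : phi π₁ b b1 hb = phi π₂ b b1 hb) : π₁ = π₂ := by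
  have hw' : phiW π₁ b b1 = phiW π₂ b b1 := by
    rw [← phi_w_eq π₁ b b1 hb, ← phi_w_eq π₂ b b1 hb, hw]
  have hfo : π₁.firstOcc b1 = π₂.firstOcc b1 := by
    rw [← firstOcc_phi π₁ b b1 hb b1, ← firstOcc_phi π₂ b b1 hb b1, hw]
  have hm : π₁.blockMax b1 = π₂.blockMax b1 := blockMax_b1_eq b b1 hb π₁ π₂ hw' hfo
  apply ext_w
  funext a
  rw [w_eq_formula π₁ b b1 hb a, w_eq_formula π₂ b b1 hb a, hm, hw']

end Phi5

end SetPartition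

/-- Let `n ≥ 1`, `k ≥ 0` with `k+1 ≤ n`, let `O ⊆ [n]` with `1 ∈ O` and
`#O = k+1`, and let `i ∈ [k]`. Then there is a bijection `φᵢ` of `P(n,k+1;O)` (partitions
with set of openers `O`) onto itself with `stat_i(π) = stat_{i+1}(φᵢ(π)) - 1` for all `π`,
where `stat_j(π) = k - rinv(F(π),π) - nrinv(g(B_j),π)` (the block `B_j` having
Fin-index `j - 1`). -/
theorem exists_bijection_stat_shift (n k : ℕ) (hn : 1 ≤ n) (hkn : k + 1 ≤ n)
    (O : Finset (Fin n)) (hO1 : (⟨0, by omega⟩ : Fin n) ∈ O) (hOcard : O.card = k + 1)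
    (i : ℕ) (hi1 : 1 ≤ i) (hik : i ≤ k) :
    ∃ φ : {π : SetPartition n (k + 1) // π.openers = O} →
          {π : SetPartition n (k + 1) // π.openers = O},
      Function.Bijective φ ∧
      ∀ π : {π : SetPartition n (k + 1) // π.openers = O},
        (k : ℤ) - (π.1.rinvSet π.1.closers : ℤ)
            - (π.1.nrinv (π.1.blockMax ⟨i - 1, by omega⟩) : ℤ) =
          ((k : ℤ) - ((φ π).1.rinvSet (φ π).1.closers : ℤ)
            - ((φ π).1.nrinv ((φ π).1.blockMax ⟨i, by omega⟩) : ℤ)) - 1 := by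
  set b : Fin (k + 1) := ⟨i - 1, by omega⟩ with hbdef
  set b1 : Fin (k + 1) := ⟨i, by omega⟩ with hb1def
  have hb : (b : ℕ) + 1 = (b1 : ℕ) := by
    rw [hbdef, hb1def]
    simp only []
    omega
  refine ⟨fun π => ⟨SetPartition.phi π.1 b b1 hb, by
      rw [SetPartition.openers_phi π.1 b b1 hb]; exact π.2⟩, ?_, ?_⟩
  · rw [← Finite.injective_iff_bijective]
    intro π₁ π₂ h
    apply Subtype.ext
    exact SetPartition.phi_injective b b1 hb π₁.1 π₂.1 (congrArg Subtype.val h)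
  · intro π
    have H := SetPartition.stat_identity π.1 b b1 hb
    simp only []
    omega
end

section
/- Let n ≥ 2, n ≥ k ≥ 1, let π ∈ P(n,k), and let π' be the partition of [n−1] obtained from π by deleting the element n. (a) If {n} is a block of π, then π' ∈ P(n−1,k−1) and mak(π) = mak(π') + (k−1). (b) If n lies in a block B_i of π with #B_i ≥ 2, then π' ∈ P(n−1,k) and mak(π) = mak(π') + (k−1) − nrinv(g,π'), where g = max(B_i \ {n}). -/
open Finset Polynomial

namespace SetPartition

variable {n k : ℕ}

lemma mem_openers {π : SetPartition n k} {i : Fin n} :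
    i ∈ π.openers ↔ ∀ j, j < i → π.w j ≠ π.w i := by
  simp [openers]

lemma mem_closers {π : SetPartition n k} {i : Fin n} :
    i ∈ π.closers ↔ ∀ j, i < j → π.w j ≠ π.w i := by
  simp [closers]

lemma blockMax_mem_closers (π : SetPartition n k) (c : Fin k) :
    π.blockMax c ∈ π.closers := by
  rw [mem_closers]
  intro j hj hwj
  have hmem : j ∈ univ.filter fun i => π.w i = c := by
    simp [hwj, w_blockMax]
  have hle := Finset.le_max' _ j hmem
  exact absurd hle (not_le.2 hj)

lemma eq_blockMax_of_closer {π : SetPartition n k} {j : Fin n} (hj : j ∈ π.closers) :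
    j = π.blockMax (π.w j) := by
  have h1 : j ∈ univ.filter fun i => π.w i = π.w j := by simp
  have h2 := Finset.le_max' _ j h1
  rcases h2.lt_or_eq with h | h
  · exact absurd (w_blockMax π (π.w j)) (mem_closers.1 hj _ h)
  · exact h

lemma card_closers_filter (π : SetPartition n k) (p : Fin k → Prop) [DecidablePred p] :
    (π.closers.filter fun j => p (π.w j)).card = (univ.filter p).card := by
  apply Finset.card_bij (fun j _ => π.w j)
  · intro a ha
    exact mem_filter.2 ⟨mem_univ _, (mem_filter.1 ha).2⟩
  · intro a ha b hb hab
    have hca := (mem_filter.1 ha).1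
    have hcb := (mem_filter.1 hb).1
    by_contra hne
    rcases lt_or_gt_of_ne hne with h | h
    · exact mem_closers.1 hca b h hab.symm
    · exact mem_closers.1 hcb a h hab
  · intro d hd
    refine ⟨π.blockMax d, mem_filter.2 ⟨blockMax_mem_closers π d, ?_⟩, w_blockMax π d⟩
    rw [w_blockMax]
    exact (mem_filter.1 hd).2

lemma card_openers_filter (π : SetPartition n k) (p : Fin k → Prop) [DecidablePred p] :
    (π.openers.filter fun j => p (π.w j)).card = (univ.filter p).card := by
  apply Finset.card_bij (fun j _ => π.w j)
  · intro a ha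
    exact mem_filter.2 ⟨mem_univ _, (mem_filter.1 ha).2⟩
  · intro a ha b hb hab
    have hca := (mem_filter.1 ha).1
    have hcb := (mem_filter.1 hb).1
    by_contra hne
    rcases lt_or_gt_of_ne hne with h | h
    · exact mem_openers.1 hcb a h hab
    · exact mem_openers.1 hca b h hab.symm
  · intro d hd
    have hne : (univ.filter fun i => π.w i = d).Nonempty := by
      obtain ⟨i, hi⟩ := π.surj d
      exact ⟨i, mem_filter.2 ⟨mem_univ i, hi⟩⟩
    set j := (univ.filter fun i => π.w i = d).min' hne with hjdef
    have hjw : π.w j = d := (mem_filter.1 (Finset.min'_mem _ hne)).2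
    refine ⟨j, mem_filter.2 ⟨mem_openers.2 ?_, by rw [hjw]; exact (mem_filter.1 hd).2⟩, hjw⟩
    intro a ha hwa
    have : j ≤ a := Finset.min'_le _ a (mem_filter.2 ⟨mem_univ a, by rw [hwa, hjw]⟩)
    exact absurd this (not_le.2 ha)

lemma card_filter_castSucc {N : ℕ} (s : Finset (Fin N)) (t : Finset (Fin (N + 1)))
    (h1 : ∀ j ∈ t, j ≠ Fin.last N)
    (h2 : ∀ i : Fin N, i.castSucc ∈ t ↔ i ∈ s) : t.card = s.card := by
  have ht : t = s.map Fin.castSuccEmb := by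
    ext j
    simp only [Finset.mem_map, Fin.coe_castSuccEmb]
    constructor
    · intro hj
      obtain ⟨i, rfl⟩ := Fin.exists_castSucc_eq.2 (h1 j hj)
      exact ⟨i, (h2 i).1 hj, rfl⟩
    · rintro ⟨i, hi, rfl⟩
      exact (h2 i).2 hi
  rw [ht, Finset.card_map]

section Transfer

variable {N k k' : ℕ} (π : SetPartition (N + 1) k) (π' : SetPartition N k')
  (hw : ∀ j : Fin N, (π'.w j : ℕ) = (π.w j.castSucc : ℕ))

include hw

lemma w_lt_iff' (a b : Fin N) :
    π.w a.castSucc < π.w b.castSucc ↔ π'.w a < π'.w b := by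
  rw [Fin.lt_def, Fin.lt_def, hw, hw]

lemma w_eq_iff' (a b : Fin N) :
    π.w a.castSucc = π.w b.castSucc ↔ π'.w a = π'.w b := by
  rw [Fin.ext_iff, Fin.ext_iff, hw, hw]

lemma openers_castSucc_iff (a : Fin N) :
    a.castSucc ∈ π.openers ↔ a ∈ π'.openers := by
  simp only [mem_openers]
  constructor
  · intro h j hj heq
    exact h j.castSucc (by simpa using hj) ((w_eq_iff' π π' hw _ _).2 heq)
  · intro h j hj heq
    have hj1 : (j : ℕ) < (a : ℕ) := hj
    have hjv : (j : ℕ) < N := hj1.trans a.isLt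
    have hj' : j = (⟨(j : ℕ), hjv⟩ : Fin N).castSucc := by ext; rfl
    rw [hj'] at heq
    rw [w_eq_iff' π π' hw] at heq
    exact h ⟨(j : ℕ), hjv⟩ (by rw [hj'] at hj; exact hj) heq

lemma closers_castSucc_iff (a : Fin N) :
    a.castSucc ∈ π.closers ↔
      (a ∈ π'.closers ∧ π.w a.castSucc ≠ π.w (Fin.last N)) := by
  simp only [mem_closers]
  constructor
  · intro h
    refine ⟨fun j hj heq => ?_, fun heq => ?_⟩
    · exact h j.castSucc (by simpa using hj) ((w_eq_iff' π π' hw _ _).2 heq)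
    · exact h (Fin.last N) (Fin.castSucc_lt_last a) heq.symm
  · rintro ⟨h, hlast⟩ j hj heq
    by_cases hjl : j = Fin.last N
    · rw [hjl] at heq
      exact hlast heq.symm
    · have hjv : (j : ℕ) < N := by
        have := j.isLt
        have : (j : ℕ) ≠ N := fun hc => hjl (Fin.ext hc)
        omega
      have hj' : j = (⟨(j : ℕ), hjv⟩ : Fin N).castSucc := by ext; rfl
      rw [hj'] at heq
      rw [w_eq_iff' π π' hw] at heq
      have hlt : a < (⟨(j : ℕ), hjv⟩ : Fin N) := by
        rw [hj'] at hj
        exact hj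
      exact mem_closers.1 (mem_filter.2 ⟨mem_univ a, h⟩) _ hlt heq

end Transfer

end SetPartition

/-- Let `n ≥ 2`, `n ≥ k ≥ 1`, let `π ∈ P(n,k)`, and let `π'` be the
partition of `[n-1]` obtained from `π` by deleting the element `n` (the element `n` has
Fin-index `n - 1`; `π'` is characterized by its word agreeing with that of `π` on `[n-1]`).
(a) If `{n}` is a block of `π`, then `π' ∈ P(n-1,k-1)` and `mak(π) = mak(π') + (k-1)`.
(b) If `n` lies in a block `B_i` of `π` with `#B_i ≥ 2`, then `π' ∈ P(n-1,k)` and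
`mak(π) = mak(π') + (k-1) - nrinv(g,π')` where `g = max (B_i \ {n})`. -/
theorem mak_delete_last (n k : ℕ) (hn : 2 ≤ n) (hk : 1 ≤ k) (hkn : k ≤ n)
    (π : SetPartition n k) :
    ((∀ j : Fin n, j ≠ ⟨n - 1, by omega⟩ → π.w j ≠ π.w ⟨n - 1, by omega⟩) →
      ∀ π' : SetPartition (n - 1) (k - 1),
        (∀ j : Fin (n - 1), ((π'.w j : ℕ) = (π.w (j.castLE (by omega)) : ℕ))) →
        π.mak = π'.mak + (k - 1)) ∧
    ((∃ j : Fin n, j ≠ ⟨n - 1, by omega⟩ ∧ π.w j = π.w ⟨n - 1, by omega⟩) →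
      ∀ π' : SetPartition (n - 1) k,
        (∀ j : Fin (n - 1), π'.w j = π.w (j.castLE (by omega))) →
        (π.mak : ℤ) = (π'.mak : ℤ) + ((k : ℤ) - 1)
          - (π'.nrinv (π'.blockMax (π.w ⟨n - 1, by omega⟩)) : ℤ)) := by
  obtain ⟨N, rfl⟩ : ∃ N, n = N + 1 := ⟨n - 1, by omega⟩
  constructor
  · -- Part (a)
    intro hsing π' hw
    obtain ⟨K, rfl⟩ : ∃ K, k = K + 1 := ⟨k - 1, by omega⟩
    replace hsing : ∀ j : Fin (N + 1), j ≠ Fin.last N → π.w j ≠ π.w (Fin.last N) :=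
      fun j h => hsing j h
    replace hw : ∀ j : Fin N, (π'.w j : ℕ) = (π.w j.castSucc : ℕ) := fun j => hw j
    have hwm : π.w (Fin.last N) = Fin.last K := by
      by_contra hne
      have hlt : π.w (Fin.last N) < Fin.last K := lt_of_le_of_ne (Fin.le_last _) hne
      obtain ⟨i, hi⟩ := π.surj (Fin.last K)
      obtain ⟨j, hj, hwj⟩ := π.rgf i (π.w (Fin.last N)) (by rw [hi]; exact hlt)
      have hjne : j ≠ Fin.last N := by
        intro hc; rw [hc] at hj
        exact absurd hj (not_lt.2 (Fin.le_last i))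
      exact hsing j hjne hwj
    have hne_last : ∀ j : Fin N, π.w j.castSucc ≠ π.w (Fin.last N) := fun j =>
      hsing j.castSucc (Fin.castSucc_lt_last j).ne
    have hopen : ∀ a : Fin N, a.castSucc ∈ π.openers ↔ a ∈ π'.openers :=
      SetPartition.openers_castSucc_iff π π' hw
    have hclos : ∀ a : Fin N, a.castSucc ∈ π.closers ↔ a ∈ π'.closers := fun a => by
      rw [SetPartition.closers_castSucc_iff π π' hw]
      simp [hne_last a]
    have hros : π.ros = π'.ros := by
      rw [SetPartition.ros, SetPartition.ros, Fin.sum_univ_castSucc]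
      have hlast0 : (π.openers.filter fun j =>
          j < Fin.last N ∧ π.w (Fin.last N) < π.w j).card = 0 := by
        rw [Finset.card_eq_zero, Finset.filter_eq_empty_iff]
        intro j _
        rw [hwm]
        rintro ⟨-, h2⟩
        exact absurd h2 (not_lt.2 (Fin.le_last _))
      have h2 : ∀ i : Fin N, (π.openers.filter fun j =>
          j < i.castSucc ∧ π.w i.castSucc < π.w j).card =
          (π'.openers.filter fun j => j < i ∧ π'.w i < π'.w j).card := by
        intro i
        apply SetPartition.card_filter_castSucc
        · intro j hj
          exact ((Finset.mem_filter.1 hj).2.1.trans_le (Fin.le_last _)).ne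
        · intro a
          simp only [Finset.mem_filter, hopen a, Fin.castSucc_lt_castSucc_iff,
            SetPartition.w_lt_iff' π π' hw]
      simp only [h2, hlast0, add_zero]
      rfl
    have hlcs : π.lcs = π'.lcs + K := by
      rw [SetPartition.lcs, SetPartition.lcs, Fin.sum_univ_castSucc]
      have hlastK : (π.closers.filter fun j =>
          j < Fin.last N ∧ π.w j < π.w (Fin.last N)).card = K := by
        have he : (π.closers.filter fun j => j < Fin.last N ∧ π.w j < π.w (Fin.last N)) =
            π.closers.filter fun j => π.w j ≠ Fin.last K := by
          apply Finset.filter_congr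
          intro j _
          rw [hwm]
          constructor
          · rintro ⟨-, h2⟩; exact h2.ne
          · intro hne2
            have hjne : j ≠ Fin.last N := fun hc => hne2 (by rw [hc, hwm])
            exact ⟨lt_of_le_of_ne (Fin.le_last j) hjne, lt_of_le_of_ne (Fin.le_last _) hne2⟩
        rw [he]
        have hcc := SetPartition.card_closers_filter π (fun d => d ≠ Fin.last K)
        rw [hcc, Finset.filter_ne', Finset.card_erase_of_mem (Finset.mem_univ _),
          Finset.card_univ, Fintype.card_fin]
        omega
      have h2 : ∀ i : Fin N, (π.closers.filter fun j =>
          j < i.castSucc ∧ π.w j < π.w i.castSucc).card =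
          (π'.closers.filter fun j => j < i ∧ π'.w j < π'.w i).card := by
        intro i
        apply SetPartition.card_filter_castSucc
        · intro j hj
          exact ((Finset.mem_filter.1 hj).2.1.trans_le (Fin.le_last _)).ne
        · intro a
          simp only [Finset.mem_filter, hclos a, Fin.castSucc_lt_castSucc_iff,
            SetPartition.w_lt_iff' π π' hw]
      simp only [h2, hlastK]
      rfl
    rw [SetPartition.mak, SetPartition.mak, hros, hlcs]
    omega
  · -- Part (b)
    intro hex π' hw
    replace hw : ∀ j : Fin N, (π'.w j : ℕ) = (π.w j.castSucc : ℕ) :=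
      fun j => congrArg Fin.val (hw j)
    obtain ⟨j0, hj0ne, hj0w⟩ := hex
    have hj0ne' : j0 ≠ Fin.last N := hj0ne
    have hj0w' : π.w j0 = π.w (Fin.last N) := hj0w
    have hj0lt : j0 < Fin.last N := lt_of_le_of_ne (Fin.le_last j0) hj0ne'
    set c : Fin k := π.w (Fin.last N) with hc
    set G : Fin N := π'.blockMax c with hG
    have hwG : π'.w G = c := SetPartition.w_blockMax π' c
    have hGclos : G ∈ π'.closers := SetPartition.blockMax_mem_closers π' c
    have huniq : ∀ j ∈ π'.closers, π'.w j = c → j = G := by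
      intro j hj hjc
      have := SetPartition.eq_blockMax_of_closer hj
      rw [hjc] at this
      exact this
    have hlast_not_opener : Fin.last N ∉ π.openers := fun hop =>
      SetPartition.mem_openers.1 hop j0 hj0lt hj0w'
    have hopen : ∀ a : Fin N, a.castSucc ∈ π.openers ↔ a ∈ π'.openers :=
      SetPartition.openers_castSucc_iff π π' hw
    have hclos : ∀ a : Fin N, a.castSucc ∈ π.closers ↔ (a ∈ π'.closers ∧ π'.w a ≠ c) := by
      intro a
      rw [SetPartition.closers_castSucc_iff π π' hw]
      have : π.w a.castSucc ≠ π.w (Fin.last N) ↔ π'.w a ≠ c := by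
        rw [← hc, Ne, Ne, Fin.ext_iff, Fin.ext_iff, hw a]
      rw [this]
    have hck : (c : ℕ) < k := c.isLt
    -- ros
    have hros : π.ros = π'.ros + (k - 1 - (c : ℕ)) := by
      rw [SetPartition.ros, SetPartition.ros, Fin.sum_univ_castSucc]
      have hlastros : (π.openers.filter fun j =>
          j < Fin.last N ∧ π.w (Fin.last N) < π.w j).card = k - 1 - (c : ℕ) := by
        have he : (π.openers.filter fun j => j < Fin.last N ∧ π.w (Fin.last N) < π.w j) =
            π.openers.filter fun j => c < π.w j := by
          apply Finset.filter_congr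
          intro j hj
          rw [← hc]
          constructor
          · rintro ⟨-, h2⟩; exact h2
          · intro h2
            have hjne : j ≠ Fin.last N := fun hcc => hlast_not_opener (hcc ▸ hj)
            exact ⟨lt_of_le_of_ne (Fin.le_last j) hjne, h2⟩
        rw [he]
        have hcc := SetPartition.card_openers_filter π (fun d => c < d)
        rw [hcc]
        have hIoi : (univ.filter fun d : Fin k => c < d) = Finset.Ioi c := by
          ext d; simp
        rw [hIoi, Fin.card_Ioi]
      have h2 : ∀ i : Fin N, (π.openers.filter fun j =>
          j < i.castSucc ∧ π.w i.castSucc < π.w j).card =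
          (π'.openers.filter fun j => j < i ∧ π'.w i < π'.w j).card := by
        intro i
        apply SetPartition.card_filter_castSucc
        · intro j hj
          exact ((Finset.mem_filter.1 hj).2.1.trans_le (Fin.le_last _)).ne
        · intro a
          simp only [Finset.mem_filter, hopen a, Fin.castSucc_lt_castSucc_iff,
            SetPartition.w_lt_iff' π π' hw]
      simp only [h2, hlastros]
      rfl
    -- lcs
    have hlcs : π.lcs + π'.nrinv G = π'.lcs + (c : ℕ) := by
      have hlastlcs : (π.closers.filter fun j =>
          j < Fin.last N ∧ π.w j < π.w (Fin.last N)).card = (c : ℕ) := by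
        have he : (π.closers.filter fun j => j < Fin.last N ∧ π.w j < π.w (Fin.last N)) =
            π.closers.filter fun j => π.w j < c := by
          apply Finset.filter_congr
          intro j _
          rw [← hc]
          constructor
          · rintro ⟨-, h2⟩; exact h2
          · intro h2
            have hjne : j ≠ Fin.last N := fun hcc => absurd (hcc ▸ h2) (lt_irrefl _)
            exact ⟨lt_of_le_of_ne (Fin.le_last j) hjne, h2⟩
        rw [he]
        have hcc := SetPartition.card_closers_filter π (fun d => d < c)
        rw [hcc]
        have hIio : (univ.filter fun d : Fin k => d < c) = Finset.Iio c := by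
          ext d; simp
        rw [hIio, Fin.card_Iio]
      have h2 : ∀ i : Fin N, (π.closers.filter fun j =>
          j < i.castSucc ∧ π.w j < π.w i.castSucc).card =
          (π'.closers.filter fun j => (j < i ∧ π'.w j < π'.w i) ∧ j ≠ G).card := by
        intro i
        apply SetPartition.card_filter_castSucc
        · intro j hj
          exact ((Finset.mem_filter.1 hj).2.1.trans_le (Fin.le_last _)).ne
        · intro a
          simp only [Finset.mem_filter, hclos a, Fin.castSucc_lt_castSucc_iff,
            SetPartition.w_lt_iff' π π' hw]
          constructor
          · rintro ⟨⟨h1, h2⟩, h3, h4⟩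
            refine ⟨h1, ⟨h3, h4⟩, fun hag => h2 (by rw [hag, hwG])⟩
          · rintro ⟨h1, ⟨h3, h4⟩, h5⟩
            exact ⟨⟨h1, fun hvc => h5 (huniq a h1 hvc)⟩, h3, h4⟩
      have h3 : ∀ i : Fin N, (π'.closers.filter fun j => j < i ∧ π'.w j < π'.w i).card =
          (π'.closers.filter fun j => (j < i ∧ π'.w j < π'.w i) ∧ j ≠ G).card +
            (if (G < i ∧ π'.w G < π'.w i) then 1 else 0) := by
        intro i
        have he : (π'.closers.filter fun j => (j < i ∧ π'.w j < π'.w i) ∧ j ≠ G) =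
            (π'.closers.filter fun j => j < i ∧ π'.w j < π'.w i).erase G := by
          rw [← Finset.filter_ne', Finset.filter_filter]
        rw [he]
        by_cases hGi : G < i ∧ π'.w G < π'.w i
        · rw [if_pos hGi]
          have hGmem : G ∈ π'.closers.filter fun j => j < i ∧ π'.w j < π'.w i :=
            Finset.mem_filter.2 ⟨hGclos, hGi⟩
          rw [Finset.card_erase_of_mem hGmem]
          have := Finset.card_pos.2 ⟨G, hGmem⟩
          omega
        · rw [if_neg hGi]
          have hGmem : G ∉ π'.closers.filter fun j => j < i ∧ π'.w j < π'.w i := by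
            intro hmem
            exact hGi (Finset.mem_filter.1 hmem).2
          rw [Finset.erase_eq_of_notMem hGmem, add_zero]
      have hnr : π'.nrinv G = ∑ i : Fin N, (if (G < i ∧ π'.w G < π'.w i) then 1 else 0) := by
        rw [SetPartition.nrinv, Finset.card_filter]
        rfl
      have hfin : π'.lcs =
          ∑ i : Fin N, (π'.closers.filter fun j => j < i ∧ π'.w j < π'.w i).card := rfl
      rw [SetPartition.lcs, Fin.sum_univ_castSucc]
      simp only [h2, hlastlcs]
      rw [hfin, hnr]
      conv_rhs => rw [Finset.sum_congr rfl (fun i _ => h3 i)]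
      rw [Finset.sum_add_distrib]
      omega
    -- conclusion
    show (π.mak : ℤ) = (π'.mak : ℤ) + ((k : ℤ) - 1) - (π'.nrinv (π'.blockMax c) : ℤ)
    rw [SetPartition.mak, SetPartition.mak]
    rw [← hG]
    omega
end

section
/- For all integers n ≥ k ≥ 1 and every ordered partition π of [n] into k blocks: mak(π) + bmaj(π) = lmak'(π) + bmaj(π), mak'(π) + bmaj(π) = lmak(π) + bmaj(π), mak(π) + binv(π) = lmak'(π) + binv(π), and mak'(π) + binv(π) = lmak(π) + binv(π); equivalently, mak(π) = lmak'(π) and mak'(π) = lmak(π). -/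
open Finset

/-- An ordered partition of `[n] = {1,…,n}` into `k` blocks `(B₁,…,B_k)` (pairwise
disjoint nonempty sets covering `[n]`, in arbitrary order), encoded by the word
`w : Fin n → Fin k` where the element `i+1` of `[n]` lies in the block `B_{w i + 1}`. -/
structure OrdPartition (n k : ℕ) where
  w : Fin n → Fin k
  surj : Function.Surjective w

namespace OrdPartition

variable {n k : ℕ}

/-- The set of openers (smallest elements of their blocks). -/
def openers (π : OrdPartition n k) : Finset (Fin n) :=
  univ.filter fun i => ∀ j, j < i → π.w j ≠ π.w i

/-- The set of closers (largest elements of their blocks). -/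
def closers (π : OrdPartition n k) : Finset (Fin n) :=
  univ.filter fun i => ∀ j, i < j → π.w j ≠ π.w i

def ros (π : OrdPartition n k) : ℕ :=
  ∑ i, (π.openers.filter fun j => j < i ∧ π.w i < π.w j).card
def rob (π : OrdPartition n k) : ℕ :=
  ∑ i, (π.openers.filter fun j => i < j ∧ π.w i < π.w j).card
def rcs (π : OrdPartition n k) : ℕ :=
  ∑ i, (π.closers.filter fun j => j < i ∧ π.w i < π.w j).card
def rcb (π : OrdPartition n k) : ℕ :=
  ∑ i, (π.closers.filter fun j => i < j ∧ π.w i < π.w j).card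
def los (π : OrdPartition n k) : ℕ :=
  ∑ i, (π.openers.filter fun j => j < i ∧ π.w j < π.w i).card
def lob (π : OrdPartition n k) : ℕ :=
  ∑ i, (π.openers.filter fun j => i < j ∧ π.w j < π.w i).card
def lcs (π : OrdPartition n k) : ℕ :=
  ∑ i, (π.closers.filter fun j => j < i ∧ π.w j < π.w i).card
def lcb (π : OrdPartition n k) : ℕ :=
  ∑ i, (π.closers.filter fun j => i < j ∧ π.w j < π.w i).card

def mak (π : OrdPartition n k) : ℕ := π.ros + π.lcs
def mak' (π : OrdPartition n k) : ℕ := π.lob + π.rcb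
def lmak (π : OrdPartition n k) : ℤ :=
  (n : ℤ) * ((k : ℤ) - 1) - ((π.los : ℤ) + (π.rcs : ℤ))
def lmak' (π : OrdPartition n k) : ℤ :=
  (n : ℤ) * ((k : ℤ) - 1) - ((π.lcb : ℤ) + (π.rob : ℤ))

/-- `B_c > B_d`: every element of block `B_c` is greater than every element of `B_d`. -/
def BlockGT (π : OrdPartition n k) (c d : Fin k) : Prop :=
  ∀ a b : Fin n, π.w a = c → π.w b = d → b < a

instance (π : OrdPartition n k) (c d : Fin k) : Decidable (π.BlockGT c d) :=
  inferInstanceAs (Decidable (∀ a b : Fin n, π.w a = c → π.w b = d → b < a))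

/-- `bmaj(π)`: the sum of all block-descent indices `i ∈ [k-1]` (1-based) with
`B_i > B_{i+1}`; the 1-based index `i` corresponds to the Fin-index `i - 1`. -/
def bmaj (π : OrdPartition n k) : ℕ :=
  ∑ t ∈ Finset.range k,
    if h : t + 1 < k then (if π.BlockGT ⟨t, by omega⟩ ⟨t + 1, h⟩ then t + 1 else 0) else 0

/-- `binv(π) = #{(i,j) : i < j, B_i > B_j}`. -/
def binv (π : OrdPartition n k) : ℕ :=
  ((univ : Finset (Fin k × Fin k)).filter fun p => p.1 < p.2 ∧ π.BlockGT p.1 p.2).card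

end OrdPartition


namespace OrdPartition

variable {n k : ℕ}

lemma exists_opener (π : OrdPartition n k) (c : Fin k) :
    ∃ j ∈ π.openers, π.w j = c := by
  classical
  obtain ⟨i, hi⟩ := π.surj c
  set S := univ.filter fun i => π.w i = c with hS
  have hne : S.Nonempty := ⟨i, by simp [hS, hi]⟩
  have hmc : π.w (S.min' hne) = c := by
    have := S.min'_mem hne; simpa [hS] using this
  refine ⟨S.min' hne, ?_, hmc⟩
  simp only [openers, mem_filter, mem_univ, true_and]
  intro j hj hwj
  have hjS : j ∈ S := by rw [hS, mem_filter]; exact ⟨mem_univ _, hwj.trans hmc⟩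
  exact absurd (S.min'_le j hjS) (not_le.mpr hj)

lemma exists_closer (π : OrdPartition n k) (c : Fin k) :
    ∃ j ∈ π.closers, π.w j = c := by
  classical
  obtain ⟨i, hi⟩ := π.surj c
  set S := univ.filter fun i => π.w i = c with hS
  have hne : S.Nonempty := ⟨i, by simp [hS, hi]⟩
  have hmc : π.w (S.max' hne) = c := by
    have := S.max'_mem hne; simpa [hS] using this
  refine ⟨S.max' hne, ?_, hmc⟩
  simp only [closers, mem_filter, mem_univ, true_and]
  intro j hj hwj
  have hjS : j ∈ S := by rw [hS, mem_filter]; exact ⟨mem_univ _, hwj.trans hmc⟩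
  exact absurd (S.le_max' j hjS) (not_le.mpr hj)

lemma opener_inj (π : OrdPartition n k) {a b : Fin n}
    (ha : a ∈ π.openers) (hb : b ∈ π.openers) (h : π.w a = π.w b) : a = b := by
  simp only [openers, mem_filter, mem_univ, true_and] at ha hb
  rcases lt_trichotomy a b with h1 | h1 | h1
  · exact absurd h (hb a h1)
  · exact h1
  · exact absurd h.symm (ha b h1)

lemma closer_inj (π : OrdPartition n k) {a b : Fin n}
    (ha : a ∈ π.closers) (hb : b ∈ π.closers) (h : π.w a = π.w b) : a = b := by
  simp only [closers, mem_filter, mem_univ, true_and] at ha hb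
  rcases lt_trichotomy a b with h1 | h1 | h1
  · exact absurd h.symm (ha b h1)
  · exact h1
  · exact absurd h (hb a h1)

lemma card_openers_filter (π : OrdPartition n k) (p : Fin k → Prop) [DecidablePred p] :
    (π.openers.filter fun j => p (π.w j)).card = (univ.filter p).card := by
  apply Finset.card_bij (fun j _ => π.w j)
  · intro a ha; simp only [mem_filter, mem_univ, true_and] at ha ⊢; exact ha.2
  · intro a ha b hb hab
    exact π.opener_inj (mem_filter.mp ha).1 (mem_filter.mp hb).1 hab
  · intro c hc
    obtain ⟨j, hj, hwj⟩ := π.exists_opener c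
    exact ⟨j, mem_filter.mpr ⟨hj, by rw [hwj]; exact (mem_filter.mp hc).2⟩, hwj⟩

lemma card_closers_filter (π : OrdPartition n k) (p : Fin k → Prop) [DecidablePred p] :
    (π.closers.filter fun j => p (π.w j)).card = (univ.filter p).card := by
  apply Finset.card_bij (fun j _ => π.w j)
  · intro a ha; simp only [mem_filter, mem_univ, true_and] at ha ⊢; exact ha.2
  · intro a ha b hb hab
    exact π.closer_inj (mem_filter.mp ha).1 (mem_filter.mp hb).1 hab
  · intro c hc
    obtain ⟨j, hj, hwj⟩ := π.exists_closer c
    exact ⟨j, mem_filter.mpr ⟨hj, by rw [hwj]; exact (mem_filter.mp hc).2⟩, hwj⟩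

lemma card_split {n : ℕ} (s : Finset (Fin n)) (i : Fin n) (p : Fin n → Prop)
    [DecidablePred p] (hp : ¬ p i) :
    (s.filter fun j => j < i ∧ p j).card + (s.filter fun j => i < j ∧ p j).card
      = (s.filter p).card := by
  classical
  rw [← Finset.card_union_of_disjoint, ← Finset.filter_or]
  · apply congrArg
    apply Finset.filter_congr
    intro j _
    constructor
    · rintro (⟨_, h⟩ | ⟨_, h⟩) <;> exact h
    · intro h
      rcases lt_trichotomy j i with h1 | h1 | h1
      · exact Or.inl ⟨h1, h⟩
      · exact absurd h (h1 ▸ hp)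
      · exact Or.inr ⟨h1, h⟩
  · rw [Finset.disjoint_left]
    rintro a ha hb
    have h1 := (Finset.mem_filter.mp ha).2.1
    have h2 := (Finset.mem_filter.mp hb).2.1
    exact absurd (h1.trans h2) (lt_irrefl a)

lemma card_gt (x : Fin k) :
    ((univ : Finset (Fin k)).filter fun c => x < c).card = k - 1 - (x : ℕ) := by
  have h : ((univ : Finset (Fin k)).filter fun c => x < c) = Finset.Ioi x := by
    ext c; simp
  rw [h, Fin.card_Ioi]

lemma card_lt (x : Fin k) :
    ((univ : Finset (Fin k)).filter fun c => c < x).card = (x : ℕ) := by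
  have h : ((univ : Finset (Fin k)).filter fun c => c < x) = Finset.Iio x := by
    ext c; simp
  rw [h, Fin.card_Iio]

end OrdPartition

/-- For all integers `n ≥ k ≥ 1` and every ordered partition `π` of
`[n]` into `k` blocks: `mak + bmaj = lmak' + bmaj`, `mak' + bmaj = lmak + bmaj`,
`mak + binv = lmak' + binv`, `mak' + binv = lmak + binv`; equivalently `mak(π) = lmak'(π)`
and `mak'(π) = lmak(π)`. -/
theorem ordPartition_mak_eq_lmak' (n k : ℕ) (hk : 1 ≤ k) (hkn : k ≤ n)
    (π : OrdPartition n k) :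
    ((π.mak : ℤ) + (π.bmaj : ℤ) = π.lmak' + (π.bmaj : ℤ)) ∧
    ((π.mak' : ℤ) + (π.bmaj : ℤ) = π.lmak + (π.bmaj : ℤ)) ∧
    ((π.mak : ℤ) + (π.binv : ℤ) = π.lmak' + (π.binv : ℤ)) ∧
    ((π.mak' : ℤ) + (π.binv : ℤ) = π.lmak + (π.binv : ℤ)) ∧
    (π.mak : ℤ) = π.lmak' ∧ (π.mak' : ℤ) = π.lmak := by
  
  classical
  have hA : π.ros + π.rob = ∑ i, (k - 1 - (π.w i : ℕ)) := by
    unfold OrdPartition.ros OrdPartition.rob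
    rw [← Finset.sum_add_distrib]
    refine Finset.sum_congr rfl fun i _ => ?_
    rw [OrdPartition.card_split π.openers i (fun j => π.w i < π.w j) (lt_irrefl _),
      ]
    exact (π.card_openers_filter (fun c => π.w i < c)).trans (OrdPartition.card_gt _)
  have hB : π.lcs + π.lcb = ∑ i, ((π.w i : ℕ)) := by
    unfold OrdPartition.lcs OrdPartition.lcb
    rw [← Finset.sum_add_distrib]
    refine Finset.sum_congr rfl fun i _ => ?_
    rw [OrdPartition.card_split π.closers i (fun j => π.w j < π.w i) (lt_irrefl _),
      ]
    exact (π.card_closers_filter (fun c => c < π.w i)).trans (OrdPartition.card_lt _)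
  have hC : π.los + π.lob = ∑ i, ((π.w i : ℕ)) := by
    unfold OrdPartition.los OrdPartition.lob
    rw [← Finset.sum_add_distrib]
    refine Finset.sum_congr rfl fun i _ => ?_
    rw [OrdPartition.card_split π.openers i (fun j => π.w j < π.w i) (lt_irrefl _),
      ]
    exact (π.card_openers_filter (fun c => c < π.w i)).trans (OrdPartition.card_lt _)
  have hD : π.rcs + π.rcb = ∑ i, (k - 1 - (π.w i : ℕ)) := by
    unfold OrdPartition.rcs OrdPartition.rcb
    rw [← Finset.sum_add_distrib]
    refine Finset.sum_congr rfl fun i _ => ?_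
    rw [OrdPartition.card_split π.closers i (fun j => π.w i < π.w j) (lt_irrefl _),
      ]
    exact (π.card_closers_filter (fun c => π.w i < c)).trans (OrdPartition.card_gt _)
  have hAB : (∑ i : Fin n, (k - 1 - (π.w i : ℕ))) + (∑ i : Fin n, ((π.w i : ℕ)))
      = n * (k - 1) := by
    rw [← Finset.sum_add_distrib]
    have : ∀ i : Fin n, (k - 1 - (π.w i : ℕ)) + (π.w i : ℕ) = k - 1 := by
      intro i
      have := (π.w i).isLt
      omega
    rw [Finset.sum_congr rfl fun i _ => this i]
    simp [mul_comm]
  have hcast : ((n * (k - 1) : ℕ) : ℤ) = (n : ℤ) * ((k : ℤ) - 1) := by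
    have : ((k - 1 : ℕ) : ℤ) = (k : ℤ) - 1 := by
      rw [Nat.cast_sub hk]; simp
    push_cast [this]
    ring
  have key1 : (π.mak : ℤ) = π.lmak' := by
    unfold OrdPartition.mak OrdPartition.lmak'
    have : π.ros + π.lcs + (π.lcb + π.rob) = n * (k - 1) := by omega
    have h' : ((π.ros + π.lcs + (π.lcb + π.rob) : ℕ) : ℤ) = ((n * (k - 1) : ℕ) : ℤ) := by
      rw [this]
    rw [hcast] at h'
    push_cast at h'
    push_cast
    linarith
  have key2 : (π.mak' : ℤ) = π.lmak := by
    unfold OrdPartition.mak' OrdPartition.lmak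
    have : π.lob + π.rcb + (π.los + π.rcs) = n * (k - 1) := by omega
    have h' : ((π.lob + π.rcb + (π.los + π.rcs) : ℕ) : ℤ) = ((n * (k - 1) : ℕ) : ℤ) := by
      rw [this]
    rw [hcast] at h'
    push_cast at h'
    push_cast
    linarith
  exact ⟨by linarith, by linarith, by linarith, by linarith, key1, key2⟩
end
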